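/- Let (W_∗, F^∗) and (W'_∗, F'^∗) be ℝ-mixed Hodge structures on finite-dimensional real vector spaces V and V', and let f : V → V' be a real linear map with f(W_i) ⊆ W'_i for all i and f_ℂ(F^p) ⊆ F'^p for all p, where f_ℂ = f ⊗ id_ℂ. Let Q = V'/f(V), with quotient map π, so Q_ℂ identifies with V'_ℂ/f_ℂ(V_ℂ). Then the filtrations W_i(Q) := π(W'_i) and F^p(Q_ℂ) := π_ℂ(F'^p) form an ℝ-mixed Hodge structure on Q. -/

import Mathlib

open TensorProduct

noncomputable section

namespace MHS

instance : RingHomSurjective (starRingEnd ℂ) :=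
  ⟨fun x => ⟨star x, star_star x⟩⟩

variable (V : Type*) [AddCommGroup V] [Module ℝ V]

/-- The inclusion `v ↦ 1 ⊗ v` of `V` into its complexification `ℂ ⊗[ℝ] V`. -/
def incl : V →ₗ[ℝ] ℂ ⊗[ℝ] V := TensorProduct.mk ℝ ℂ V 1

/-- Complex conjugation on the complexification `ℂ ⊗[ℝ] V`, as a
conjugate-linear (i.e. `starRingEnd ℂ`-semilinear) map. -/
def conjC : (ℂ ⊗[ℝ] V) →ₛₗ[starRingEnd ℂ] (ℂ ⊗[ℝ] V) where
  toFun := LinearMap.rTensor V (Complex.conjAe.toLinearMap : ℂ →ₗ[ℝ] ℂ)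
  map_add' := fun x y => map_add _ x y
  map_smul' := by
    intro c x
    induction x using TensorProduct.induction_on with
    | zero => simp
    | tmul a v =>
        simp only [TensorProduct.smul_tmul', LinearMap.rTensor_tmul, smul_eq_mul,
          AlgEquiv.toLinearMap_apply, map_mul, starRingEnd_apply]
        rfl
    | add x y hx hy =>
        simp only [smul_add, map_add]
        exact congrArg₂ (· + ·) hx hy

/-- The complexification `W ⊗ ℂ` of a real subspace `W ⊆ V`, as a complex
subspace of `ℂ ⊗[ℝ] V`. -/
def cx (W : Submodule ℝ V) : Submodule ℂ (ℂ ⊗[ℝ] V) :=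
  Submodule.span ℂ (incl V '' (W : Set V))

variable {V}

/-- `(W, F)` is an `ℝ`-mixed Hodge structure on `V`:  `W` is an increasing
exhaustive filtration of `V` by real subspaces, `F` a decreasing exhaustive
filtration of `ℂ ⊗[ℝ] V` by complex subspaces, and for every `n, p` the induced
filtration on `Gr^W_n = (W n ⊗ ℂ)/(W (n-1) ⊗ ℂ)` satisfies the weight `n`
Hodge decomposition conditions (expressed here at the level of preimages in
`W n ⊗ ℂ` of the relevant subspaces of the quotient). -/
structure IsRMHS (W : ℤ → Submodule ℝ V) (F : ℤ → Submodule ℂ (ℂ ⊗[ℝ] V)) : Prop where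
  monoW : Monotone W
  antiF : Antitone F
  w_bot : ∃ a : ℤ, ∀ i ≤ a, W i = ⊥
  w_top : ∃ b : ℤ, ∀ i, b ≤ i → W i = ⊤
  f_top : ∃ a : ℤ, ∀ p ≤ a, F p = ⊤
  f_bot : ∃ b : ℤ, ∀ p, b ≤ p → F p = ⊥
  gr_inf : ∀ n p : ℤ,
      ((F p ⊓ cx V (W n)) ⊔ cx V (W (n-1))) ⊓
        ((((F (n+1-p)).map (conjC V)) ⊓ cx V (W n)) ⊔ cx V (W (n-1)))
      = cx V (W (n-1))
  gr_sup : ∀ n p : ℤ,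
      (F p ⊓ cx V (W n)) ⊔ ((((F (n+1-p)).map (conjC V)) ⊓ cx V (W n)) ⊔ cx V (W (n-1)))
      = cx V (W n)

/-- The subspace `R^{p,q} = (W_{p+q} ⊗ ℂ) ∩ F^p`. -/
def Rpq (W : ℤ → Submodule ℝ V) (F : ℤ → Submodule ℂ (ℂ ⊗[ℝ] V)) (p q : ℤ) :
    Submodule ℂ (ℂ ⊗[ℝ] V) :=
  cx V (W (p + q)) ⊓ F p

/-- The subspace
`L^{p,q} = (W_{p+q} ⊗ ℂ) ∩ σ(F^q) + Σ_{i ≥ 2} (W_{p+q-i} ⊗ ℂ) ∩ σ(F^{q-i+1})`. -/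
def Lpq (W : ℤ → Submodule ℝ V) (F : ℤ → Submodule ℂ (ℂ ⊗[ℝ] V)) (p q : ℤ) :
    Submodule ℂ (ℂ ⊗[ℝ] V) :=
  (cx V (W (p + q)) ⊓ (F q).map (conjC V)) ⊔
    ⨆ i : ℤ, ⨆ _ : 2 ≤ i, (cx V (W (p + q - i)) ⊓ (F (q - i + 1)).map (conjC V))

/-- The Deligne subspace `I^{p,q} = R^{p,q} ∩ L^{p,q}`. -/
def Ipq (W : ℤ → Submodule ℝ V) (F : ℤ → Submodule ℂ (ℂ ⊗[ℝ] V)) (p q : ℤ) :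
    Submodule ℂ (ℂ ⊗[ℝ] V) :=
  Rpq W F p q ⊓ Lpq W F p q

section Basics

variable (V : Type*) [AddCommGroup V] [Module ℝ V]

@[simp] lemma conjC_tmul (c : ℂ) (v : V) :
    conjC V (c ⊗ₜ[ℝ] v) = (starRingEnd ℂ c) ⊗ₜ[ℝ] v := rfl

@[simp] lemma conjC_conjC (x : ℂ ⊗[ℝ] V) : conjC V (conjC V x) = x := by
  induction x using TensorProduct.induction_on with
  | zero => simp
  | tmul c v => simp
  | add x y hx hy => rw [map_add, map_add, hx, hy]

@[simp] lemma conjC_incl (v : V) : conjC V (incl V v) = incl V v := by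
  simp [incl, TensorProduct.mk_apply]

variable {V}

lemma mem_map_conjC {S : Submodule ℂ (ℂ ⊗[ℝ] V)} {x : ℂ ⊗[ℝ] V} :
    x ∈ S.map (conjC V) ↔ conjC V x ∈ S := by
  constructor
  · rintro ⟨y, hy, rfl⟩; simpa using hy
  · intro hx; exact ⟨conjC V x, hx, by simp⟩

@[simp] lemma map_conjC_map_conjC (S : Submodule ℂ (ℂ ⊗[ℝ] V)) :
    (S.map (conjC V)).map (conjC V) = S := by
  ext x; simp [mem_map_conjC]

lemma map_conjC_mono {S T : Submodule ℂ (ℂ ⊗[ℝ] V)} (h : S ≤ T) :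
    S.map (conjC V) ≤ T.map (conjC V) := Submodule.map_mono h

lemma map_conjC_inf (S T : Submodule ℂ (ℂ ⊗[ℝ] V)) :
    (S ⊓ T).map (conjC V) = S.map (conjC V) ⊓ T.map (conjC V) := by
  ext x
  simp only [Submodule.mem_inf, mem_map_conjC]

lemma map_conjC_sup (S T : Submodule ℂ (ℂ ⊗[ℝ] V)) :
    (S ⊔ T).map (conjC V) = S.map (conjC V) ⊔ T.map (conjC V) :=
  Submodule.map_sup _ _ _

lemma map_conjC_iSup {ι : Sort*} (S : ι → Submodule ℂ (ℂ ⊗[ℝ] V)) :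
    (⨆ i, S i).map (conjC V) = ⨆ i, (S i).map (conjC V) :=
  Submodule.map_iSup _ _

lemma map_conjC_le_iff {S T : Submodule ℂ (ℂ ⊗[ℝ] V)} :
    S.map (conjC V) ≤ T ↔ S ≤ T.map (conjC V) := by
  constructor
  · intro h x hx
    exact mem_map_conjC.mpr (by simpa using h (mem_map_conjC.mpr (by simpa using hx)))
  · intro h x hx
    rcases mem_map_conjC.mp hx with hx'
    simpa using (mem_map_conjC.mp (h hx'))

lemma cx_mono {W W' : Submodule ℝ V} (h : W ≤ W') : cx V W ≤ cx V W' :=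
  Submodule.span_mono (Set.image_mono h)

lemma incl_mem_cx {W : Submodule ℝ V} {v : V} (hv : v ∈ W) : incl V v ∈ cx V W :=
  Submodule.subset_span ⟨v, hv, rfl⟩

@[simp] lemma cx_bot : cx V (⊥ : Submodule ℝ V) = ⊥ := by
  rw [cx, Submodule.span_eq_bot]
  rintro x ⟨v, hv, rfl⟩
  simp only [Submodule.bot_coe, Set.mem_singleton_iff] at hv
  simp [hv, incl]

@[simp] lemma cx_top : cx V (⊤ : Submodule ℝ V) = ⊤ := by
  rw [eq_top_iff]
  intro x _
  induction x using TensorProduct.induction_on with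
  | zero => exact Submodule.zero_mem _
  | tmul c v =>
      have : (c ⊗ₜ[ℝ] v) = c • incl V v := by simp [incl, TensorProduct.smul_tmul']
      rw [this]
      exact Submodule.smul_mem _ _ (incl_mem_cx trivial)
  | add x y hx hy => exact Submodule.add_mem _ (hx trivial) (hy trivial)

lemma map_conjC_cx (W : Submodule ℝ V) : (cx V W).map (conjC V) = cx V W := by
  rw [cx, Submodule.map_span]
  congr 1
  ext x
  constructor
  · rintro ⟨y, ⟨v, hv, rfl⟩, rfl⟩; exact ⟨v, hv, by simp⟩
  · rintro ⟨v, hv, rfl⟩; exact ⟨incl V v, ⟨v, hv, rfl⟩, by simp⟩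

variable {V₂ : Type*} [AddCommGroup V₂] [Module ℝ V₂]

lemma baseChange_incl (g : V →ₗ[ℝ] V₂) (v : V) :
    g.baseChange ℂ (incl V v) = incl V₂ (g v) := by simp [incl]

lemma baseChange_conjC_comm (g : V →ₗ[ℝ] V₂) (x : ℂ ⊗[ℝ] V) :
    g.baseChange ℂ (conjC V x) = conjC V₂ (g.baseChange ℂ x) := by
  induction x using TensorProduct.induction_on with
  | zero => simp
  | tmul c v => simp
  | add x y hx hy => rw [map_add, map_add, map_add, map_add, hx, hy]

lemma map_baseChange_conjC (g : V →ₗ[ℝ] V₂) (S : Submodule ℂ (ℂ ⊗[ℝ] V)) :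
    (S.map (conjC V)).map (g.baseChange ℂ) = (S.map (g.baseChange ℂ)).map (conjC V₂) := by
  ext x
  constructor
  · rintro ⟨y, ⟨z, hz, rfl⟩, rfl⟩
    exact ⟨g.baseChange ℂ z, ⟨z, hz, rfl⟩, (baseChange_conjC_comm g z).symm⟩
  · rintro ⟨y, ⟨z, hz, rfl⟩, rfl⟩
    exact ⟨conjC V z, ⟨z, hz, rfl⟩, (baseChange_conjC_comm g z)⟩

lemma cx_map (g : V →ₗ[ℝ] V₂) (S : Submodule ℝ V) :
    cx V₂ (S.map g) = (cx V S).map (g.baseChange ℂ) := by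
  rw [cx, cx, Submodule.map_span]
  congr 1
  ext x
  constructor
  · rintro ⟨v, ⟨w, hw, rfl⟩, rfl⟩; exact ⟨incl V w, ⟨w, hw, rfl⟩, baseChange_incl g w⟩
  · rintro ⟨y, ⟨w, hw, rfl⟩, rfl⟩; exact ⟨g w, ⟨w, hw, rfl⟩, (baseChange_incl g w).symm⟩

end Basics
section Deligne

variable {V : Type*} [AddCommGroup V] [Module ℝ V]
variable {W : ℤ → Submodule ℝ V} {F : ℤ → Submodule ℂ (ℂ ⊗[ℝ] V)}

lemma IsRMHS.mem_grsup (h : IsRMHS W F) (p : ℤ) {n : ℤ} {x : ℂ ⊗[ℝ] V}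
    (hx : x ∈ cx V (W n)) :
    ∃ x₁ ∈ F p ⊓ cx V (W n), ∃ x₂ ∈ (F (n+1-p)).map (conjC V) ⊓ cx V (W n),
      ∃ x₃ ∈ cx V (W (n-1)), x = x₁ + x₂ + x₃ := by
  rw [← h.gr_sup n p] at hx
  obtain ⟨x₁, hx₁, y, hy, hxy⟩ := Submodule.mem_sup.mp hx
  obtain ⟨x₂, hx₂, x₃, hx₃, hyz⟩ := Submodule.mem_sup.mp hy
  exact ⟨x₁, hx₁, x₂, hx₂, x₃, hx₃, by rw [← hxy, ← hyz]; abel⟩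

lemma IsRMHS.mem_grinf (h : IsRMHS W F) {n p : ℤ} {x : ℂ ⊗[ℝ] V}
    (h1 : x ∈ (F p ⊓ cx V (W n)) ⊔ cx V (W (n-1)))
    (h2 : x ∈ ((F (n+1-p)).map (conjC V) ⊓ cx V (W n)) ⊔ cx V (W (n-1))) :
    x ∈ cx V (W (n-1)) := by
  rw [← h.gr_inf n p]
  exact ⟨h1, h2⟩

lemma IsRMHS.cx_mono' (h : IsRMHS W F) {m n : ℤ} (hmn : m ≤ n) :
    cx V (W m) ≤ cx V (W n) := cx_mono (h.monoW hmn)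

lemma I_le_W (p q : ℤ) : Ipq W F p q ≤ cx V (W (p+q)) :=
  le_trans inf_le_left inf_le_left

lemma I_le_F (p q : ℤ) : Ipq W F p q ≤ F p :=
  le_trans inf_le_left inf_le_right

lemma I_le_L (p q : ℤ) : Ipq W F p q ≤ Lpq W F p q := inf_le_right

lemma IsRMHS.Lpq_le (h : IsRMHS W F) (p q j : ℤ) (hj : 0 ≤ j) :
    Lpq W F p q ≤ (F (q - j)).map (conjC V) ⊔ cx V (W (p + q - j - 2)) := by
  apply sup_le
  · exact le_sup_of_le_left
      (le_trans inf_le_right (map_conjC_mono (h.antiF (by omega))))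
  · apply iSup_le; intro i; apply iSup_le; intro hi
    by_cases hij : i ≤ j + 1
    · exact le_sup_of_le_left
        (le_trans inf_le_right (map_conjC_mono (h.antiF (by omega))))
    · exact le_sup_of_le_right
        (le_trans inf_le_left (h.cx_mono' (by omega)))

lemma IsRMHS.I_inf_W (h : IsRMHS W F) (p q : ℤ) {x : ℂ ⊗[ℝ] V}
    (hxI : x ∈ Ipq W F p q) (hxW : x ∈ cx V (W (p+q-1))) : x = 0 := by
  obtain ⟨a, ha⟩ := h.w_bot
  have step : ∀ m : ℤ, m ≤ p + q - 1 → x ∈ cx V (W m) → x ∈ cx V (W (m-1)) := by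
    intro m hm hxm
    have hL : x ∈ (F (q - (p+q-1-m))).map (conjC V) ⊔ cx V (W (p + q - (p+q-1-m) - 2)) :=
      h.Lpq_le p q (p+q-1-m) (by omega) (I_le_L p q hxI)
    have e1 : p + q - (p+q-1-m) - 2 = m - 1 := by omega
    have e2 : q - (p+q-1-m) = m + 1 - p := by omega
    rw [e1, e2] at hL
    obtain ⟨s, hs, w, hw, hsw⟩ := Submodule.mem_sup.mp hL
    have hsW : s ∈ cx V (W m) := by
      have : s = x - w := by rw [← hsw]; abel
      rw [this]
      exact Submodule.sub_mem _ hxm (h.cx_mono' (by omega) hw)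
    exact h.mem_grinf (n := m) (p := p)
      (Submodule.mem_sup_left ⟨I_le_F p q hxI, hxm⟩)
      (Submodule.mem_sup.mpr ⟨s, ⟨hs, hsW⟩, w, hw, hsw⟩)
  have down : ∀ k : ℕ, x ∈ cx V (W (p + q - 1 - k)) := by
    intro k
    induction k with
    | zero => simpa using hxW
    | succ k ih =>
        have := step (p + q - 1 - k) (by omega) ih
        have e : p + q - 1 - k - 1 = p + q - 1 - (k+1 : ℕ) := by push_cast; ring
        rwa [e] at this
  have hk := down (p + q - 1 - a).toNat
  have : cx V (W (p + q - 1 - (p + q - 1 - a).toNat)) = ⊥ := by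
    rw [ha _ (by omega)]; exact cx_bot
  rw [this, Submodule.mem_bot] at hk
  exact hk

lemma IsRMHS.liftH (h : IsRMHS W F) (p q : ℤ) :
    ((F p ⊓ cx V (W (p+q))) ⊔ cx V (W (p+q-1))) ⊓
      (((F q).map (conjC V) ⊓ cx V (W (p+q))) ⊔ cx V (W (p+q-1)))
      ≤ Ipq W F p q ⊔ cx V (W (p+q-1)) := by
  obtain ⟨a, ha⟩ := h.w_bot
  have claim : ∀ d : ℕ, ∀ k : ℤ, 0 ≤ k → p + q - 1 - k ≤ a + d →
      ∀ x, x ∈ F p → x ∈ cx V (W (p+q)) →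
      x ∈ Lpq W F p q ⊔ cx V (W (p+q-1-k)) →
      x ∈ Ipq W F p q ⊔ (F p ⊓ cx V (W (p+q-1))) := by
    intro d
    induction d with
    | zero =>
        intro k hk hbound x hxF hxW hxL
        have hb : cx V (W (p+q-1-k)) = ⊥ := by
          rw [ha _ (by omega)]; exact cx_bot
        rw [hb, sup_bot_eq] at hxL
        exact Submodule.mem_sup_left ⟨⟨hxW, hxF⟩, hxL⟩
    | succ d ih =>
        intro k hk hbound x hxF hxW hxL
        by_cases hcase : p + q - 1 - k ≤ a + d
        · exact ih k hk hcase x hxF hxW hxL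
        obtain ⟨l, hl, w, hw, hlw⟩ := Submodule.mem_sup.mp hxL
        obtain ⟨w₁, hw₁, w₂, hw₂, w₃, hw₃, hwdec⟩ := h.mem_grsup p hw
        have e2 : p + q - 1 - k + 1 - p = q - k := by omega
        rw [e2] at hw₂
        -- l + w₂ ∈ Lpq
        have hw₂L : w₂ ∈ Lpq W F p q := by
          rcases eq_or_lt_of_le hk with hk0 | hk1
          · apply Submodule.mem_sup_left
            refine ⟨h.cx_mono' (by omega) hw₂.2, ?_⟩
            have : q - k = q := by omega
            rw [this] at hw₂
            exact hw₂.1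
          · apply Submodule.mem_sup_right
            have : w₂ ∈ cx V (W (p + q - (k+1))) ⊓ (F (q - (k+1) + 1)).map (conjC V) := by
              constructor
              · have e : p + q - (k+1) = p + q - 1 - k := by omega
                rw [e]; exact hw₂.2
              · have e : q - (k+1) + 1 = q - k := by omega
                rw [e]; exact hw₂.1
            exact Submodule.mem_iSup_of_mem (k+1)
              (Submodule.mem_iSup_of_mem (by omega) this)
        have hm1 : x - w₁ ∈ F p := Submodule.sub_mem _ hxF hw₁.1
        have hm2 : x - w₁ ∈ cx V (W (p+q)) :=
          Submodule.sub_mem _ hxW (h.cx_mono' (by omega) hw₁.2)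
        have heq : x - w₁ = l + w₂ + w₃ := by rw [← hlw, hwdec]; abel
        have hm3 : x - w₁ ∈ Lpq W F p q ⊔ cx V (W (p+q-1-(k+1))) := by
          rw [heq]
          refine Submodule.add_mem _
            (Submodule.mem_sup_left (Submodule.add_mem _ hl hw₂L)) ?_
          apply Submodule.mem_sup_right
          have e : p + q - 1 - k - 1 = p + q - 1 - (k+1) := by omega
          rw [← e]; exact hw₃
        have hx' := ih (k+1) (by omega) (by omega) (x - w₁) hm1 hm2 hm3
        have : x = (x - w₁) + w₁ := by abel
        rw [this]
        exact Submodule.add_mem _ hx'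
          (Submodule.mem_sup_right ⟨hw₁.1, h.cx_mono' (by omega) hw₁.2⟩)
  intro x hx
  obtain ⟨hx1, hx2⟩ := Submodule.mem_inf.mp hx
  obtain ⟨a₁, ha₁, w, hw, haw⟩ := Submodule.mem_sup.mp hx1
  obtain ⟨b₁, hb₁, w', hw', hbw⟩ := Submodule.mem_sup.mp hx2
  have ha₁L : a₁ ∈ Lpq W F p q ⊔ cx V (W (p+q-1-0)) := by
    have : a₁ = b₁ + (w' - w) := by
      have h1 : a₁ = x - w := by rw [← haw]; abel
      have h2 : b₁ + (w' - w) = x - w := by rw [← hbw]; abel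
      rw [h1, h2]
    rw [this]
    apply Submodule.add_mem
    · exact Submodule.mem_sup_left (Submodule.mem_sup_left ⟨hb₁.2, hb₁.1⟩)
    · apply Submodule.mem_sup_right
      have e : p + q - 1 - 0 = p + q - 1 := by ring
      rw [e]
      exact Submodule.sub_mem _ hw' hw
  have := claim (p + q - 1 - a).toNat 0 le_rfl (by omega) a₁ ha₁.1 ha₁.2 ha₁L
  have ha₁' : a₁ ∈ Ipq W F p q ⊔ cx V (W (p+q-1)) := by
    obtain ⟨i, hi, j, hj, hij⟩ := Submodule.mem_sup.mp this
    rw [← hij]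
    exact Submodule.add_mem _ (Submodule.mem_sup_left hi) (Submodule.mem_sup_right hj.2)
  rw [← haw]
  exact Submodule.add_mem _ ha₁' (Submodule.mem_sup_right hw)

end Deligne
section Deligne2

variable {V : Type*} [AddCommGroup V] [Module ℝ V]
variable {W : ℤ → Submodule ℝ V} {F : ℤ → Submodule ℂ (ℂ ⊗[ℝ] V)}

lemma mem_biSup_pair {M : Type*} [AddCommGroup M] [Module ℂ M]
    {P : ℤ × ℤ → Prop} {S : ℤ × ℤ → Submodule ℂ M} {x : M} :
    x ∈ (⨆ pq, ⨆ _ : P pq, S pq) ↔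
      ∃ t : Finset (ℤ × ℤ), (∀ pq ∈ t, P pq) ∧
        ∃ z : ℤ × ℤ → M, (∀ pq ∈ t, z pq ∈ S pq) ∧ x = ∑ pq ∈ t, z pq := by
  classical
  constructor
  · intro hx
    obtain ⟨f, hf, hsum⟩ := (Submodule.mem_iSup_iff_exists_finsupp _ x).mp hx
    refine ⟨f.support, ?_, f, ?_, ?_⟩
    · intro pq hpq
      by_contra hP
      have := hf pq
      rw [iSup_neg hP, Submodule.mem_bot] at this
      exact Finsupp.mem_support_iff.mp hpq this
    · intro pq hpq
      have := hf pq
      by_cases hP : P pq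
      · rwa [iSup_pos hP] at this
      · rw [iSup_neg hP, Submodule.mem_bot] at this
        rw [this]; exact Submodule.zero_mem _
    · rw [← hsum]; rfl
  · rintro ⟨t, hP, z, hz, rfl⟩
    apply Submodule.sum_mem
    intro pq hpq
    exact Submodule.mem_iSup_of_mem pq (Submodule.mem_iSup_of_mem (hP pq hpq) (hz pq hpq))

/-- `H^{pq}` lifts: the `F`-graded pieces exhaust each graded weight piece. -/
lemma IsRMHS.W_le_iSupI (h : IsRMHS W F) (n : ℤ) :
    cx V (W n) ≤ ⨆ pq : ℤ × ℤ, ⨆ _ : pq.1 + pq.2 ≤ n, Ipq W F pq.1 pq.2 := by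
  classical
  obtain ⟨a, ha⟩ := h.w_bot
  obtain ⟨aF, haF⟩ := h.f_top
  obtain ⟨bF, hbF⟩ := h.f_bot
  -- step in the Hodge filtration
  have Fstep : ∀ n p : ℤ, F p ⊓ cx V (W n) ≤
      (F (p+1) ⊓ cx V (W n)) ⊔ (Ipq W F p (n-p) ⊔ cx V (W (n-1))) := by
    intro n p x hx
    obtain ⟨y, hy, z, hz, w, hw, hdec⟩ := h.mem_grsup (p+1) hx.2
    have e1 : n + 1 - (p + 1) = n - p := by omega
    rw [e1] at hz
    have hzmem : z ∈ Ipq W F p (n-p) ⊔ cx V (W (n - 1)) := by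
      have hliftH := h.liftH p (n - p)
      have e2 : p + (n - p) = n := by omega
      rw [e2] at hliftH
      apply hliftH
      constructor
      · have hz' : z = x - y - w := by rw [hdec]; abel
        rw [hz']
        refine Submodule.mem_sup.mpr ⟨x - y, ?_, -w, Submodule.neg_mem _ hw, by abel⟩
        exact ⟨Submodule.sub_mem _ hx.1 (h.antiF (by omega) hy.1),
          Submodule.sub_mem _ hx.2 hy.2⟩
      · exact Submodule.mem_sup_left hz
    rw [hdec]
    refine Submodule.add_mem _ (Submodule.add_mem _ (Submodule.mem_sup_left hy) ?_) ?_
    · exact Submodule.mem_sup_right hzmem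
    · exact Submodule.mem_sup_right (Submodule.mem_sup_right hw)
  -- descend through the Hodge filtration
  have pdesc : ∀ e : ℕ, ∀ p : ℤ, bF - e ≤ p → ∀ n : ℤ, F p ⊓ cx V (W n) ≤
      (⨆ pq : ℤ × ℤ, ⨆ _ : pq.1 + pq.2 ≤ n, Ipq W F pq.1 pq.2) ⊔ cx V (W (n-1)) := by
    intro e
    induction e with
    | zero =>
        intro p hp n
        have : F p = ⊥ := hbF p (by omega)
        rw [this, bot_inf_eq]
        exact bot_le
    | succ e ih =>
        intro p hp n
        by_cases hcase : bF - e ≤ p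
        · exact ih p hcase n
        calc F p ⊓ cx V (W n)
            ≤ (F (p+1) ⊓ cx V (W n)) ⊔ (Ipq W F p (n-p) ⊔ cx V (W (n-1))) := Fstep n p
          _ ≤ (⨆ pq : ℤ × ℤ, ⨆ _ : pq.1 + pq.2 ≤ n, Ipq W F pq.1 pq.2) ⊔ cx V (W (n-1)) := by
              apply sup_le
              · exact ih (p+1) (by omega) n
              · apply sup_le
                · refine le_sup_of_le_left ?_
                  refine SetLike.le_def.mpr (fun {x} hx => Submodule.mem_iSup_of_mem (p, n-p)
                    (Submodule.mem_iSup_of_mem (by simp) hx))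
                · exact le_sup_right
  have level : ∀ n : ℤ, cx V (W n) ≤
      (⨆ pq : ℤ × ℤ, ⨆ _ : pq.1 + pq.2 ≤ n, Ipq W F pq.1 pq.2) ⊔ cx V (W (n-1)) := by
    intro n
    have hF : F aF = ⊤ := haF aF le_rfl
    have := pdesc (bF - aF).toNat aF (by omega) n
    rwa [hF, top_inf_eq] at this
  -- climb the weight filtration
  have claim : ∀ d : ℕ, ∀ n : ℤ, n ≤ a + d → cx V (W n) ≤
      ⨆ pq : ℤ × ℤ, ⨆ _ : pq.1 + pq.2 ≤ n, Ipq W F pq.1 pq.2 := by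
    intro d
    induction d with
    | zero =>
        intro n hn
        rw [ha n (by omega), cx_bot]
        exact bot_le
    | succ d ih =>
        intro n hn
        by_cases hcase : n ≤ a + d
        · exact ih n hcase
        refine le_trans (level n) (sup_le le_rfl ?_)
        refine le_trans (ih (n-1) (by omega)) ?_
        apply iSup_le; intro pq; apply iSup_le; intro hpq
        refine SetLike.le_def.mpr (fun {x} hx => Submodule.mem_iSup_of_mem pq
          (Submodule.mem_iSup_of_mem (by omega) hx))
  intro x hx
  exact claim (n - a).toNat n (by omega) hx

lemma IsRMHS.top_le_iSupI (h : IsRMHS W F) :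
    (⊤ : Submodule ℂ (ℂ ⊗[ℝ] V)) ≤
      ⨆ pq : ℤ × ℤ, ⨆ _ : True, Ipq W F pq.1 pq.2 := by
  obtain ⟨b, hb⟩ := h.w_top
  have : (⊤ : Submodule ℂ (ℂ ⊗[ℝ] V)) = cx V (W b) := by rw [hb b le_rfl, cx_top]
  rw [this]
  refine le_trans (h.W_le_iSupI b) ?_
  apply iSup_le; intro pq; apply iSup_le; intro _
  refine SetLike.le_def.mpr (fun {x} hx => Submodule.mem_iSup_of_mem pq
    (Submodule.mem_iSup_of_mem trivial hx))

/-- Independence at the top weight level. -/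
lemma IsRMHS.top_ind (h : IsRMHS W F) (n : ℤ) (s : Finset ℤ) (y : ℤ → ℂ ⊗[ℝ] V)
    (hy : ∀ p ∈ s, y p ∈ Ipq W F p (n - p))
    (hsum : (∑ p ∈ s, y p) ∈ cx V (W (n-1))) :
    ∀ p ∈ s, y p ∈ cx V (W (n-1)) := by
  classical
  revert hy hsum
  induction s using Finset.induction_on_max with
  | empty => intro _ _ p hp; exact absurd hp (Finset.notMem_empty p)
  | insert p₀ s hmax ih =>
      intro hy hsum
      have hp₀s : p₀ ∉ s := fun hc => lt_irrefl p₀ (hmax p₀ hc)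
      rw [Finset.sum_insert hp₀s] at hsum
      have hy₀ : y p₀ ∈ Ipq W F p₀ (n - p₀) := hy p₀ (Finset.mem_insert_self _ _)
      have e₀ : p₀ + (n - p₀) = n := by omega
      -- the sum over s lies in (σ F^{n+1-p₀} ⊓ 𝒲 n) ⊔ 𝒲 (n-2)
      have hrest : (∑ p ∈ s, y p) ∈
          ((F (n+1-p₀)).map (conjC V) ⊓ cx V (W n)) ⊔ cx V (W (n-2)) := by
        apply Submodule.sum_mem
        intro p hp
        have hyp := hy p (Finset.mem_insert_of_mem hp)
        have hplt : p < p₀ := hmax p hp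
        have hL := h.Lpq_le p (n - p) 0 le_rfl (I_le_L p (n-p) hyp)
        have e1 : n - p - 0 = n - p := by ring
        have e2 : p + (n - p) - 0 - 2 = n - 2 := by omega
        rw [e1, e2] at hL
        obtain ⟨sp, hsp, wp, hwp, hspw⟩ := Submodule.mem_sup.mp hL
        have hspW : sp ∈ cx V (W n) := by
          have : sp = y p - wp := by rw [← hspw]; abel
          rw [this]
          refine Submodule.sub_mem _ ?_ (h.cx_mono' (by omega) hwp)
          have := I_le_W (W := W) (F := F) p (n-p) hyp
          rwa [show p + (n - p) = n by omega] at this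
        refine Submodule.mem_sup.mpr ⟨sp, ⟨?_, hspW⟩, wp, hwp, hspw⟩
        exact map_conjC_mono (h.antiF (by omega)) hsp
      -- y p₀ ∈ 𝒲 (n-1) by gr_inf at (n, p₀)
      have hyp₀W : y p₀ ∈ cx V (W (n-1)) := by
        apply h.mem_grinf (n := n) (p := p₀)
        · apply Submodule.mem_sup_left
          refine ⟨I_le_F p₀ (n-p₀) hy₀, ?_⟩
          have := I_le_W (W := W) (F := F) p₀ (n-p₀) hy₀
          rwa [e₀] at this
        · have : y p₀ = (∑ p ∈ insert p₀ s, y p) - (∑ p ∈ s, y p) := by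
            rw [Finset.sum_insert hp₀s]; abel
          rw [Finset.sum_insert hp₀s] at this
          rw [this]
          apply Submodule.sub_mem
          · exact Submodule.mem_sup_right hsum
          · obtain ⟨sp, hsp, wp, hwp, hspw⟩ := Submodule.mem_sup.mp hrest
            exact Submodule.mem_sup.mpr ⟨sp, hsp, wp, h.cx_mono' (by omega) hwp, hspw⟩
      intro p hp
      rcases Finset.mem_insert.mp hp with rfl | hps
      · exact hyp₀W
      · refine ih (fun p hp' => hy p (Finset.mem_insert_of_mem hp')) ?_ p hps
        have : (∑ p ∈ s, y p) = (y p₀ + ∑ p ∈ s, y p) - y p₀ := by abel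
        rw [this]
        exact Submodule.sub_mem _ hsum hyp₀W

end Deligne2
section Deligne3

variable {V : Type*} [AddCommGroup V] [Module ℝ V]
variable {W : ℤ → Submodule ℝ V} {F : ℤ → Submodule ℂ (ℂ ⊗[ℝ] V)}

/-- Vanishing of a top-weight family whose sum lies in lower weight. -/
lemma IsRMHS.filter_top_zero (h : IsRMHS W F) (N : ℤ) (t : Finset (ℤ × ℤ))
    (z : ℤ × ℤ → ℂ ⊗[ℝ] V)
    (hz : ∀ pq ∈ t, z pq ∈ Ipq W F pq.1 pq.2)
    (hwts : ∀ pq ∈ t, pq.1 + pq.2 = N)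
    (hsum : (∑ pq ∈ t, z pq) ∈ cx V (W (N-1))) :
    ∀ pq ∈ t, z pq = 0 := by
  classical
  have hmem : ∀ pq ∈ t, pq = (pq.1, N - pq.1) := by
    intro pq hpq
    have := hwts pq hpq
    exact Prod.ext rfl (by omega)
  set s := t.image Prod.fst with hs
  set y : ℤ → ℂ ⊗[ℝ] V := fun p => z (p, N - p) with hy
  have hinj : ∀ x ∈ t, ∀ x' ∈ t, x.1 = x'.1 → x = x' := by
    intro x hx x' hx' hxx
    have h1 := hwts x hx
    have h2 := hwts x' hx'
    exact Prod.ext hxx (by omega)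
  have hsum_img : (∑ p ∈ s, y p) = ∑ pq ∈ t, z pq := by
    rw [hs, Finset.sum_image hinj]
    apply Finset.sum_congr rfl
    intro pq hpq
    show z (pq.1, N - pq.1) = z pq
    rw [← hmem pq hpq]
  have hyI : ∀ p ∈ s, y p ∈ Ipq W F p (N - p) := by
    intro p hp
    obtain ⟨pq, hpq, rfl⟩ := Finset.mem_image.mp hp
    have h2 : pq.1 + pq.2 = N := hwts pq hpq
    have e : N - pq.1 = pq.2 := by omega
    show z (pq.1, N - pq.1) ∈ Ipq W F pq.1 (N - pq.1)
    rw [e, Prod.mk.eta]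
    exact hz pq hpq
  intro pq hpq
  have hyW := h.top_ind N s y hyI (by rw [hsum_img]; exact hsum) pq.1
    (Finset.mem_image_of_mem _ hpq)
  have hzy : z pq = y pq.1 := by
    show z pq = z (pq.1, N - pq.1)
    rw [← hmem pq hpq]
  have h2 : pq.1 + pq.2 = N := hwts pq hpq
  apply h.I_inf_W pq.1 pq.2 (hz pq hpq)
  rw [show pq.1 + pq.2 - 1 = N - 1 by omega, hzy]
  exact hyW

lemma IsRMHS.masterW (h : IsRMHS W F) (m : ℤ) (t : Finset (ℤ × ℤ))
    (z : ℤ × ℤ → ℂ ⊗[ℝ] V)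
    (hz : ∀ pq ∈ t, z pq ∈ Ipq W F pq.1 pq.2)
    (hsum : (∑ pq ∈ t, z pq) ∈ cx V (W m)) :
    ∀ pq ∈ t, m < pq.1 + pq.2 → z pq = 0 := by
  classical
  revert hz hsum
  induction t using Finset.strongInductionOn with
  | _ t ih =>
    intro hz hsum
    rcases Finset.eq_empty_or_nonempty t with rfl | hne
    · intro pq hpq; exact absurd hpq (Finset.notMem_empty pq)
    set N := t.sup' hne (fun pq => pq.1 + pq.2) with hN
    by_cases hNm : N ≤ m
    · intro pq hpq hgt
      exfalso
      have := Finset.le_sup' (f := fun pq : ℤ × ℤ => pq.1 + pq.2) hpq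
      omega
    · obtain ⟨pq₀, hpq₀, hpq₀N⟩ := Finset.exists_mem_eq_sup' hne (fun pq => pq.1 + pq.2)
      set P : ℤ × ℤ → Prop := fun pq => pq.1 + pq.2 = N with hP
      have hsplit : (∑ pq ∈ t.filter P, z pq) + (∑ pq ∈ t.filter (fun pq => ¬ P pq), z pq)
          = ∑ pq ∈ t, z pq := Finset.sum_filter_add_sum_filter_not t P z
      have hrest : (∑ pq ∈ t.filter (fun pq => ¬ P pq), z pq) ∈ cx V (W (N-1)) := by
        apply Submodule.sum_mem
        intro pq hpq
        obtain ⟨hpqt, hpqn⟩ := Finset.mem_filter.mp hpq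
        have hle := Finset.le_sup' (f := fun pq : ℤ × ℤ => pq.1 + pq.2) hpqt
        refine h.cx_mono' (show pq.1 + pq.2 ≤ N - 1 by simp [hP] at hpqn; omega) ?_
        exact I_le_W _ _ (hz pq hpqt)
      have htop : (∑ pq ∈ t.filter P, z pq) ∈ cx V (W (N-1)) := by
        have heq : (∑ pq ∈ t.filter P, z pq)
            = (∑ pq ∈ t, z pq) - (∑ pq ∈ t.filter (fun pq => ¬ P pq), z pq) := by
          rw [← hsplit]; abel
        rw [heq]
        exact Submodule.sub_mem _ (h.cx_mono' (by omega) hsum) hrest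
      have hzero := h.filter_top_zero N (t.filter P) z
        (fun pq hpq => hz pq (Finset.mem_filter.mp hpq).1)
        (fun pq hpq => (Finset.mem_filter.mp hpq).2)
        htop
      have hsum' : (∑ pq ∈ t.filter (fun pq => ¬ P pq), z pq) ∈ cx V (W m) := by
        have hz0 : (∑ pq ∈ t.filter P, z pq) = 0 := Finset.sum_eq_zero hzero
        rw [← hsplit, hz0, zero_add] at hsum
        exact hsum
      have hssub : t.filter (fun pq => ¬ P pq) ⊂ t := by
        refine Finset.filter_ssubset.mpr ⟨pq₀, hpq₀, ?_⟩
        simp [hP]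
        omega
      have hrec := ih _ hssub (fun pq hpq => hz pq (Finset.mem_filter.mp hpq).1) hsum'
      intro pq hpq hgt
      by_cases hw : P pq
      · exact hzero pq (Finset.mem_filter.mpr ⟨hpq, hw⟩)
      · exact hrec pq (Finset.mem_filter.mpr ⟨hpq, hw⟩) hgt

lemma IsRMHS.masterF (h : IsRMHS W F) (r : ℤ) (t : Finset (ℤ × ℤ))
    (z : ℤ × ℤ → ℂ ⊗[ℝ] V)
    (hz : ∀ pq ∈ t, z pq ∈ Ipq W F pq.1 pq.2)
    (hlt : ∀ pq ∈ t, pq.1 < r)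
    (hsum : (∑ pq ∈ t, z pq) ∈ F r) :
    (∑ pq ∈ t, z pq) = 0 := by
  classical
  revert hz hlt hsum
  induction t using Finset.strongInductionOn with
  | _ t ih =>
    intro hz hlt hsum
    rcases Finset.eq_empty_or_nonempty t with rfl | hne
    · simp
    set N := t.sup' hne (fun pq => pq.1 + pq.2) with hN
    obtain ⟨pq₀, hpq₀, hpq₀N⟩ := Finset.exists_mem_eq_sup' hne (fun pq => pq.1 + pq.2)
    have hxW : (∑ pq ∈ t, z pq) ∈ cx V (W N) := by
      apply Submodule.sum_mem
      intro pq hpq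
      have hle := Finset.le_sup' (f := fun pq : ℤ × ℤ => pq.1 + pq.2) hpq
      exact h.cx_mono' hle (I_le_W _ _ (hz pq hpq))
    have hxB : (∑ pq ∈ t, z pq) ∈
        ((F (N+1-r)).map (conjC V) ⊓ cx V (W N)) ⊔ cx V (W (N-1)) := by
      apply Submodule.sum_mem
      intro pq hpq
      have hle := Finset.le_sup' (f := fun pq : ℤ × ℤ => pq.1 + pq.2) hpq
      by_cases hw : pq.1 + pq.2 = N
      · have hL := h.Lpq_le pq.1 pq.2 0 le_rfl (I_le_L _ _ (hz pq hpq))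
        rw [show pq.2 - 0 = pq.2 by ring, show pq.1 + pq.2 - 0 - 2 = N - 2 by omega] at hL
        obtain ⟨sp, hsp, wp, hwp, hspw⟩ := Submodule.mem_sup.mp hL
        have hspW : sp ∈ cx V (W N) := by
          have heq : sp = z pq - wp := by rw [← hspw]; abel
          rw [heq]
          refine Submodule.sub_mem _ ?_ (h.cx_mono' (by omega) hwp)
          have := I_le_W (W := W) (F := F) pq.1 pq.2 (hz pq hpq)
          rwa [hw] at this
        refine Submodule.mem_sup.mpr ⟨sp, ⟨?_, hspW⟩, wp, h.cx_mono' (by omega) hwp, hspw⟩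
        have hplt := hlt pq hpq
        exact map_conjC_mono (h.antiF (by omega)) hsp
      · apply Submodule.mem_sup_right
        exact h.cx_mono' (show pq.1 + pq.2 ≤ N - 1 by omega) (I_le_W _ _ (hz pq hpq))
    have hxW' : (∑ pq ∈ t, z pq) ∈ cx V (W (N-1)) :=
      h.mem_grinf (n := N) (p := r) (Submodule.mem_sup_left ⟨hsum, hxW⟩) hxB
    set P : ℤ × ℤ → Prop := fun pq => pq.1 + pq.2 = N with hP
    have hsplit : (∑ pq ∈ t.filter P, z pq) + (∑ pq ∈ t.filter (fun pq => ¬ P pq), z pq)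
        = ∑ pq ∈ t, z pq := Finset.sum_filter_add_sum_filter_not t P z
    have hrest : (∑ pq ∈ t.filter (fun pq => ¬ P pq), z pq) ∈ cx V (W (N-1)) := by
      apply Submodule.sum_mem
      intro pq hpq
      obtain ⟨hpqt, hpqn⟩ := Finset.mem_filter.mp hpq
      have hle := Finset.le_sup' (f := fun pq : ℤ × ℤ => pq.1 + pq.2) hpqt
      refine h.cx_mono' (show pq.1 + pq.2 ≤ N - 1 by simp [hP] at hpqn; omega) ?_
      exact I_le_W _ _ (hz pq hpqt)
    have htop : (∑ pq ∈ t.filter P, z pq) ∈ cx V (W (N-1)) := by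
      have heq : (∑ pq ∈ t.filter P, z pq)
          = (∑ pq ∈ t, z pq) - (∑ pq ∈ t.filter (fun pq => ¬ P pq), z pq) := by
        rw [← hsplit]; abel
      rw [heq]
      exact Submodule.sub_mem _ hxW' hrest
    have hzero := h.filter_top_zero N (t.filter P) z
      (fun pq hpq => hz pq (Finset.mem_filter.mp hpq).1)
      (fun pq hpq => (Finset.mem_filter.mp hpq).2)
      htop
    have hz0 : (∑ pq ∈ t.filter P, z pq) = 0 := Finset.sum_eq_zero hzero
    have heq2 : (∑ pq ∈ t, z pq) = ∑ pq ∈ t.filter (fun pq => ¬ P pq), z pq := by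
      rw [← hsplit, hz0, zero_add]
    have hssub : t.filter (fun pq => ¬ P pq) ⊂ t := by
      refine Finset.filter_ssubset.mpr ⟨pq₀, hpq₀, ?_⟩
      simp [hP]
      omega
    rw [heq2]
    exact ih _ hssub (fun pq hpq => hz pq (Finset.mem_filter.mp hpq).1)
      (fun pq hpq => hlt pq (Finset.mem_filter.mp hpq).1)
      (by rw [← heq2]; exact hsum)

end Deligne3
section Morphism

variable {V V' : Type*} [AddCommGroup V] [Module ℝ V] [AddCommGroup V'] [Module ℝ V']
variable {W : ℤ → Submodule ℝ V} {F : ℤ → Submodule ℂ (ℂ ⊗[ℝ] V)}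
variable {W' : ℤ → Submodule ℝ V'} {F' : ℤ → Submodule ℂ (ℂ ⊗[ℝ] V')}
variable {f : V →ₗ[ℝ] V'}

lemma map_fC_cx (hfW : ∀ i : ℤ, (W i).map f ≤ W' i) (n : ℤ) :
    (cx V (W n)).map (f.baseChange ℂ) ≤ cx V' (W' n) := by
  rw [← cx_map]; exact cx_mono (hfW n)

lemma mem_map_fC_F (hfF : ∀ p : ℤ, (F p).map (f.baseChange ℂ) ≤ F' p) {p : ℤ}
    {u : ℂ ⊗[ℝ] V} (hu : u ∈ F p) : f.baseChange ℂ u ∈ F' p :=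
  hfF p ⟨u, hu, rfl⟩

lemma mem_map_fC_conjF (hfF : ∀ p : ℤ, (F p).map (f.baseChange ℂ) ≤ F' p) {p : ℤ}
    {u : ℂ ⊗[ℝ] V} (hu : u ∈ (F p).map (conjC V)) :
    f.baseChange ℂ u ∈ (F' p).map (conjC V') := by
  rw [mem_map_conjC] at hu ⊢
  rw [← baseChange_conjC_comm]
  exact mem_map_fC_F hfF hu

lemma map_fC_I (hfW : ∀ i : ℤ, (W i).map f ≤ W' i)
    (hfF : ∀ p : ℤ, (F p).map (f.baseChange ℂ) ≤ F' p) (p q : ℤ) :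
    (Ipq W F p q).map (f.baseChange ℂ) ≤ Ipq W' F' p q := by
  have hσ : ∀ r : ℤ, ((F r).map (conjC V)).map (f.baseChange ℂ) ≤ (F' r).map (conjC V') := by
    intro r; rw [map_baseChange_conjC]; exact map_conjC_mono (hfF r)
  unfold Ipq Rpq Lpq
  refine le_trans (Submodule.map_inf_le _) (inf_le_inf ?_ ?_)
  · exact le_trans (Submodule.map_inf_le _) (inf_le_inf (map_fC_cx hfW _) (hfF _))
  · rw [Submodule.map_sup]
    refine sup_le_sup ?_ ?_
    · exact le_trans (Submodule.map_inf_le _) (inf_le_inf (map_fC_cx hfW _) (hσ _))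
    · rw [Submodule.map_iSup]
      refine iSup_le fun i => ?_
      rw [Submodule.map_iSup]
      refine iSup_le fun hi => ?_
      refine le_trans
        (le_trans (Submodule.map_inf_le _) (inf_le_inf (map_fC_cx hfW _) (hσ _))) ?_
      exact le_iSup_of_le i (le_iSup_of_le hi le_rfl)

lemma mem_map_fC_I (hfW : ∀ i : ℤ, (W i).map f ≤ W' i)
    (hfF : ∀ p : ℤ, (F p).map (f.baseChange ℂ) ≤ F' p) {p q : ℤ}
    {u : ℂ ⊗[ℝ] V} (hu : u ∈ Ipq W F p q) :
    f.baseChange ℂ u ∈ Ipq W' F' p q :=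
  map_fC_I hfW hfF p q ⟨u, hu, rfl⟩

/-- Strictness with respect to the weight filtration. -/
lemma strictW (h : IsRMHS W F) (h' : IsRMHS W' F')
    (hfW : ∀ i : ℤ, (W i).map f ≤ W' i)
    (hfF : ∀ p : ℤ, (F p).map (f.baseChange ℂ) ≤ F' p) (n : ℤ) :
    LinearMap.range (f.baseChange ℂ) ⊓ cx V' (W' n) ≤ (cx V (W n)).map (f.baseChange ℂ) := by
  classical
  rintro x ⟨⟨u, rfl⟩, hxW⟩
  have hu : u ∈ ⨆ pq : ℤ × ℤ, ⨆ _ : True, Ipq W F pq.1 pq.2 :=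
    h.top_le_iSupI Submodule.mem_top
  obtain ⟨t, -, z, hzI, rfl⟩ := mem_biSup_pair.mp hu
  rw [map_sum] at hxW ⊢
  have hzero := h'.masterW n t (fun pq => f.baseChange ℂ (z pq))
    (fun pq hpq => mem_map_fC_I hfW hfF (hzI pq hpq)) hxW
  set P : ℤ × ℤ → Prop := fun pq => pq.1 + pq.2 ≤ n with hP
  have hsplit : (∑ pq ∈ t.filter P, f.baseChange ℂ (z pq))
      + (∑ pq ∈ t.filter (fun pq => ¬ P pq), f.baseChange ℂ (z pq))
      = ∑ pq ∈ t, f.baseChange ℂ (z pq) :=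
    Finset.sum_filter_add_sum_filter_not t P _
  have hz0 : (∑ pq ∈ t.filter (fun pq => ¬ P pq), f.baseChange ℂ (z pq)) = 0 := by
    apply Finset.sum_eq_zero
    intro pq hpq
    obtain ⟨hpqt, hpqn⟩ := Finset.mem_filter.mp hpq
    exact hzero pq hpqt (by simp [hP] at hpqn; omega)
  rw [← hsplit, hz0, add_zero, ← map_sum]
  refine ⟨∑ pq ∈ t.filter P, z pq, ?_, rfl⟩
  apply Submodule.sum_mem
  intro pq hpq
  obtain ⟨hpqt, hpqle⟩ := Finset.mem_filter.mp hpq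
  exact h.cx_mono' hpqle (I_le_W _ _ (hzI pq hpqt))

/-- Joint strictness with respect to the Hodge and weight filtrations. -/
lemma strictFW (h : IsRMHS W F) (h' : IsRMHS W' F')
    (hfW : ∀ i : ℤ, (W i).map f ≤ W' i)
    (hfF : ∀ p : ℤ, (F p).map (f.baseChange ℂ) ≤ F' p) (p n : ℤ) :
    F' p ⊓ (cx V' (W' n) ⊔ LinearMap.range (f.baseChange ℂ)) ≤
      (F' p ⊓ cx V' (W' n)) ⊔ LinearMap.range (f.baseChange ℂ) := by
  classical
  rintro x ⟨hxF, hxWK⟩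
  obtain ⟨ω, hω, k, hk, rfl⟩ := Submodule.mem_sup.mp hxWK
  obtain ⟨t₁, ht₁, z₁, hz₁, rfl⟩ := mem_biSup_pair.mp (h'.W_le_iSupI n hω)
  obtain ⟨u, rfl⟩ := hk
  obtain ⟨t₂, -, z₂, hz₂, rfl⟩ := mem_biSup_pair.mp (h.top_le_iSupI (Submodule.mem_top (x := u)))
  set g := f.baseChange ℂ with hg
  set t := t₁ ∪ t₂ with ht
  set ζ : ℤ × ℤ → ℂ ⊗[ℝ] V' := fun pq =>
    (if pq ∈ t₁ then z₁ pq else 0) + (if pq ∈ t₂ then g (z₂ pq) else 0) with hζ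
  have hζI : ∀ pq ∈ t, ζ pq ∈ Ipq W' F' pq.1 pq.2 := by
    intro pq _
    apply Submodule.add_mem
    · split_ifs with h1
      · exact hz₁ pq h1
      · exact Submodule.zero_mem _
    · split_ifs with h2
      · exact mem_map_fC_I hfW hfF (hz₂ pq h2)
      · exact Submodule.zero_mem _
  have hx : (∑ pq ∈ t₁, z₁ pq) + g (∑ pq ∈ t₂, z₂ pq) = ∑ pq ∈ t, ζ pq := by
    rw [hζ, Finset.sum_add_distrib, Finset.sum_ite_mem, Finset.sum_ite_mem,
      Finset.union_inter_cancel_left, Finset.union_inter_cancel_right, map_sum]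
  rw [hx] at hxF ⊢
  set P : ℤ × ℤ → Prop := fun pq => pq.1 < p with hP
  have hsplit : (∑ pq ∈ t.filter P, ζ pq) + (∑ pq ∈ t.filter (fun pq => ¬ P pq), ζ pq)
      = ∑ pq ∈ t, ζ pq := Finset.sum_filter_add_sum_filter_not t P ζ
  have hrestF : (∑ pq ∈ t.filter (fun pq => ¬ P pq), ζ pq) ∈ F' p := by
    apply Submodule.sum_mem
    intro pq hpq
    obtain ⟨hpqt, hpqn⟩ := Finset.mem_filter.mp hpq
    refine h'.antiF (show p ≤ pq.1 by simp [hP] at hpqn; omega) (I_le_F _ _ (hζI pq hpqt))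
  have hz0 : (∑ pq ∈ t.filter P, ζ pq) = 0 := by
    apply h'.masterF p (t.filter P) ζ
      (fun pq hpq => hζI pq (Finset.mem_filter.mp hpq).1)
      (fun pq hpq => (Finset.mem_filter.mp hpq).2)
    have heq : (∑ pq ∈ t.filter P, ζ pq)
        = (∑ pq ∈ t, ζ pq) - (∑ pq ∈ t.filter (fun pq => ¬ P pq), ζ pq) := by
      rw [← hsplit]; abel
    rw [heq]
    exact Submodule.sub_mem _ hxF hrestF
  have heq2 : (∑ pq ∈ t, ζ pq) = ∑ pq ∈ t.filter (fun pq => ¬ P pq), ζ pq := by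
    rw [← hsplit, hz0, zero_add]
  rw [heq2]
  have hsplit2 : (∑ pq ∈ t.filter (fun pq => ¬ P pq), ζ pq)
      = (∑ pq ∈ t.filter (fun pq => ¬ P pq), (if pq ∈ t₁ then z₁ pq else 0))
        + (∑ pq ∈ t.filter (fun pq => ¬ P pq), (if pq ∈ t₂ then g (z₂ pq) else 0)) := by
    rw [hζ, Finset.sum_add_distrib]
  rw [hsplit2]
  apply Submodule.add_mem
  · apply Submodule.mem_sup_left
    apply Submodule.sum_mem
    intro pq hpq
    obtain ⟨hpqt, hpqn⟩ := Finset.mem_filter.mp hpq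
    split_ifs with h1
    · constructor
      · exact h'.antiF (show p ≤ pq.1 by simp [hP] at hpqn; omega) (I_le_F _ _ (hz₁ pq h1))
      · exact h'.cx_mono' (ht₁ pq h1) (I_le_W _ _ (hz₁ pq h1))
    · exact Submodule.zero_mem _
  · apply Submodule.mem_sup_right
    apply Submodule.sum_mem
    intro pq _
    split_ifs with h2
    · exact ⟨z₂ pq, rfl⟩
    · exact Submodule.zero_mem _

/-- Conjugate version of `strictFW`. -/
lemma strictFWc (h : IsRMHS W F) (h' : IsRMHS W' F')
    (hfW : ∀ i : ℤ, (W i).map f ≤ W' i)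
    (hfF : ∀ p : ℤ, (F p).map (f.baseChange ℂ) ≤ F' p) (q n : ℤ) :
    (F' q).map (conjC V') ⊓ (cx V' (W' n) ⊔ LinearMap.range (f.baseChange ℂ)) ≤
      ((F' q).map (conjC V') ⊓ cx V' (W' n)) ⊔ LinearMap.range (f.baseChange ℂ) := by
  rintro x ⟨hxF, hxWK⟩
  have hKconj : ∀ y : ℂ ⊗[ℝ] V', y ∈ LinearMap.range (f.baseChange ℂ) →
      conjC V' y ∈ LinearMap.range (f.baseChange ℂ) := by
    rintro y ⟨u, rfl⟩
    exact ⟨conjC V u, (baseChange_conjC_comm f u).symm ▸ (baseChange_conjC_comm f u)⟩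
  have hWconj : ∀ (m : ℤ) (y : ℂ ⊗[ℝ] V'), y ∈ cx V' (W' m) → conjC V' y ∈ cx V' (W' m) := by
    intro m y hy
    rw [← map_conjC_cx (W' m)]
    exact ⟨y, hy, rfl⟩
  have h1 : conjC V' x ∈ F' q := mem_map_conjC.mp hxF
  have h2 : conjC V' x ∈ cx V' (W' n) ⊔ LinearMap.range (f.baseChange ℂ) := by
    obtain ⟨ω, hω, k, hk, rfl⟩ := Submodule.mem_sup.mp hxWK
    rw [map_add]
    exact Submodule.add_mem _ (Submodule.mem_sup_left (hWconj n ω hω))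
      (Submodule.mem_sup_right (hKconj k hk))
  have h3 := strictFW h h' hfW hfF q n ⟨h1, h2⟩
  obtain ⟨a, ha, k, hk, hak⟩ := Submodule.mem_sup.mp h3
  have hx : x = conjC V' a + conjC V' k := by
    have := congrArg (conjC V') hak
    rw [map_add] at this
    simpa using this.symm
  rw [hx]
  refine Submodule.add_mem _ (Submodule.mem_sup_left ⟨mem_map_conjC.mpr (by simpa using ha.1),
    hWconj n a ha.2⟩) (Submodule.mem_sup_right (hKconj k hk))

end Morphism
section Core

variable {V V' : Type*} [AddCommGroup V] [Module ℝ V] [AddCommGroup V'] [Module ℝ V']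
variable {W : ℤ → Submodule ℝ V} {F : ℤ → Submodule ℂ (ℂ ⊗[ℝ] V)}
variable {W' : ℤ → Submodule ℝ V'} {F' : ℤ → Submodule ℂ (ℂ ⊗[ℝ] V')}
variable {f : V →ₗ[ℝ] V'}

/-- The key computation on `Gr^W_n` of the quotient. -/
lemma coreT3 (h : IsRMHS W F) (h' : IsRMHS W' F')
    (hfW : ∀ i : ℤ, (W i).map f ≤ W' i)
    (hfF : ∀ p : ℤ, (F p).map (f.baseChange ℂ) ≤ F' p) (n p : ℤ) :
    (((F' p ⊓ cx V' (W' n)) ⊔ cx V' (W' (n-1))) ⊔ LinearMap.range (f.baseChange ℂ)) ⊓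
      ((((F' (n+1-p)).map (conjC V') ⊓ cx V' (W' n)) ⊔ cx V' (W' (n-1))) ⊔
        LinearMap.range (f.baseChange ℂ))
      ≤ cx V' (W' (n-1)) ⊔ LinearMap.range (f.baseChange ℂ) := by
  rintro x ⟨hx1, hx2⟩
  obtain ⟨e1, he1, k, hkK, hek⟩ := Submodule.mem_sup.mp hx1
  obtain ⟨a, ha, w, hw, haw⟩ := Submodule.mem_sup.mp he1
  obtain ⟨e2, he2, k', hk'K, hek'⟩ := Submodule.mem_sup.mp hx2
  obtain ⟨b, hb, w', hw', hbw⟩ := Submodule.mem_sup.mp he2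
  have hxa : a + w + k = x := by rw [← hek, ← haw]
  have hxb : b + w' + k' = x := by rw [← hek', ← hbw]
  have hab : a - b ∈ cx V' (W' n) ⊓ (cx V' (W' (n-1)) ⊔ LinearMap.range (f.baseChange ℂ)) := by
    constructor
    · exact Submodule.sub_mem _ ha.2 hb.2
    · have key : a - b = (w' - w) + (k' - k) := by
        have h0 : a + w + k = b + w' + k' := by rw [hxa, hxb]
        have h1 : a = ((w' - w) + (k' - k)) + b := by
          calc a = (b + w' + k') - w - k := by rw [← h0]; abel
            _ = ((w' - w) + (k' - k)) + b := by abel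
        rw [h1]; abel
      rw [key]
      exact Submodule.add_mem _
        (Submodule.mem_sup_left (Submodule.sub_mem _ hw' hw))
        (Submodule.mem_sup_right (Submodule.sub_mem _ hk'K hkK))
  have hmod : cx V' (W' n) ⊓ (cx V' (W' (n-1)) ⊔ LinearMap.range (f.baseChange ℂ)) ≤
      cx V' (W' (n-1)) ⊔ (LinearMap.range (f.baseChange ℂ) ⊓ cx V' (W' n)) := by
    rw [inf_comm, sup_inf_assoc_of_le _ (h'.cx_mono' (show n - 1 ≤ n by omega))]
  obtain ⟨w₂, hw₂, k₂, hk₂, hwk₂⟩ := Submodule.mem_sup.mp (hmod hab)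
  obtain ⟨u, hu, rfl⟩ := strictW h h' hfW hfF n hk₂
  obtain ⟨u₁, hu₁, u₂, hu₂, u₃, hu₃, hudec⟩ := h.mem_grsup p hu
  have hfu : f.baseChange ℂ u
      = f.baseChange ℂ u₁ + f.baseChange ℂ u₂ + f.baseChange ℂ u₃ := by
    rw [hudec, map_add, map_add]
  have h2 : a = (w₂ + f.baseChange ℂ u) + b := sub_eq_iff_eq_add.mp hwk₂.symm
  have hkey : a - f.baseChange ℂ u₁ ∈ cx V' (W' (n-1)) := by
    apply h'.mem_grinf (n := n) (p := p)
    · apply Submodule.mem_sup_left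
      refine ⟨Submodule.sub_mem _ ha.1 (mem_map_fC_F hfF hu₁.1),
        Submodule.sub_mem _ ha.2 (map_fC_cx hfW n ⟨u₁, hu₁.2, rfl⟩)⟩
    · have heq : a - f.baseChange ℂ u₁
          = (b + f.baseChange ℂ u₂) + (w₂ + f.baseChange ℂ u₃) := by
        rw [h2, hfu]; abel
      rw [heq]
      refine Submodule.mem_sup.mpr ⟨b + f.baseChange ℂ u₂, ⟨?_, ?_⟩,
        w₂ + f.baseChange ℂ u₃, ?_, rfl⟩
      · exact Submodule.add_mem _ hb.1 (mem_map_fC_conjF hfF hu₂.1)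
      · exact Submodule.add_mem _ hb.2 (map_fC_cx hfW n ⟨u₂, hu₂.2, rfl⟩)
      · exact Submodule.add_mem _ hw₂ (map_fC_cx hfW (n-1) ⟨u₃, hu₃, rfl⟩)
  have hax : x = ((a - f.baseChange ℂ u₁) + w) + (f.baseChange ℂ u₁ + k) := by
    rw [← hxa]; abel
  rw [hax]
  refine Submodule.add_mem _ (Submodule.mem_sup_left (Submodule.add_mem _ hkey hw)) ?_
  exact Submodule.mem_sup_right (Submodule.add_mem _ ⟨u₁, rfl⟩ hkK)

end Core

section Quot

variable {V V' : Type*} [AddCommGroup V] [Module ℝ V] [AddCommGroup V'] [Module ℝ V']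
variable (f : V →ₗ[ℝ] V')

lemma piC_surjective :
    Function.Surjective ⇑(((LinearMap.range f).mkQ).baseChange ℂ) :=
  LinearMap.lTensor_surjective ℂ (Submodule.mkQ_surjective _)

lemma ker_piC : LinearMap.ker (((LinearMap.range f).mkQ).baseChange ℂ)
    = LinearMap.range (f.baseChange ℂ) := by
  have hexact : Function.Exact (⇑(f.baseChange ℂ))
      (⇑(((LinearMap.range f).mkQ).baseChange ℂ)) := by
    have h0 : Function.Exact ⇑f ⇑(LinearMap.range f).mkQ :=
      LinearMap.exact_iff.mpr (Submodule.ker_mkQ _)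
    exact Module.Flat.lTensor_exact ℂ h0
  exact LinearMap.exact_iff.mp hexact

lemma comap_map_piC (A : Submodule ℂ (ℂ ⊗[ℝ] V')) :
    Submodule.comap (((LinearMap.range f).mkQ).baseChange ℂ)
        (A.map (((LinearMap.range f).mkQ).baseChange ℂ))
      = A ⊔ LinearMap.range (f.baseChange ℂ) := by
  rw [Submodule.comap_map_eq, ker_piC]

lemma map_piC_inf (A B : Submodule ℂ (ℂ ⊗[ℝ] V')) :
    A.map (((LinearMap.range f).mkQ).baseChange ℂ)
        ⊓ B.map (((LinearMap.range f).mkQ).baseChange ℂ)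
      = ((A ⊔ LinearMap.range (f.baseChange ℂ)) ⊓ (B ⊔ LinearMap.range (f.baseChange ℂ))).map
          (((LinearMap.range f).mkQ).baseChange ℂ) := by
  rw [← comap_map_piC f A, ← comap_map_piC f B, ← Submodule.comap_inf,
    Submodule.map_comap_eq_of_surjective (piC_surjective f)]

lemma map_piC_K :
    (LinearMap.range (f.baseChange ℂ)).map (((LinearMap.range f).mkQ).baseChange ℂ) = ⊥ := by
  rw [eq_bot_iff]
  rintro x ⟨y, hy, rfl⟩
  rw [← ker_piC] at hy
  simpa using hy

end Quot
end MHS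

/-- The cokernel `Q = V'/f(V)` of a morphism of `ℝ`-mixed
Hodge structures, with the filtrations `W_i(Q) = π(W'_i)` and
`F^p(Q_ℂ) = π_ℂ(F'^p)` (under the identification of `Q_ℂ = ℂ ⊗ Q` with
`V'_ℂ / f_ℂ(V_ℂ)`), is an `ℝ`-mixed Hodge structure on `Q`. -/
theorem cokernel_is_RMHS
    (V V' : Type*) [AddCommGroup V] [Module ℝ V] [FiniteDimensional ℝ V]
    [AddCommGroup V'] [Module ℝ V'] [FiniteDimensional ℝ V']
    (W : ℤ → Submodule ℝ V) (F : ℤ → Submodule ℂ (ℂ ⊗[ℝ] V))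
    (W' : ℤ → Submodule ℝ V') (F' : ℤ → Submodule ℂ (ℂ ⊗[ℝ] V'))
    (h : MHS.IsRMHS W F) (h' : MHS.IsRMHS W' F')
    (f : V →ₗ[ℝ] V')
    (hfW : ∀ i : ℤ, (W i).map f ≤ W' i)
    (hfF : ∀ p : ℤ, (F p).map (f.baseChange ℂ) ≤ F' p) :
    MHS.IsRMHS (V := V' ⧸ LinearMap.range f)
      (fun i => (W' i).map (LinearMap.range f).mkQ)
      (fun p => (F' p).map (((LinearMap.range f).mkQ).baseChange ℂ)) := by
  classical
  obtain ⟨aW, haW⟩ := h'.w_bot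
  obtain ⟨bW, hbW⟩ := h'.w_top
  obtain ⟨aF, haF⟩ := h'.f_top
  obtain ⟨bF, hbF⟩ := h'.f_bot
  have hsurj := MHS.piC_surjective f
  have hcq : ∀ i : ℤ, MHS.cx (V' ⧸ LinearMap.range f) ((W' i).map (LinearMap.range f).mkQ)
      = (MHS.cx V' (W' i)).map (((LinearMap.range f).mkQ).baseChange ℂ) :=
    fun i => MHS.cx_map (LinearMap.range f).mkQ (W' i)
  have hconj : ∀ q : ℤ, ((F' q).map (((LinearMap.range f).mkQ).baseChange ℂ)).map
        (MHS.conjC (V' ⧸ LinearMap.range f))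
      = ((F' q).map (MHS.conjC V')).map (((LinearMap.range f).mkQ).baseChange ℂ) :=
    fun q => (MHS.map_baseChange_conjC (LinearMap.range f).mkQ (F' q)).symm
  refine ⟨fun i j hij => Submodule.map_mono (h'.monoW hij),
    fun p q hpq => Submodule.map_mono (h'.antiF hpq),
    ⟨aW, fun i hi => by rw [haW i hi, Submodule.map_bot]⟩,
    ⟨bW, fun i hi => by rw [hbW i hi, Submodule.map_top, Submodule.range_mkQ]⟩,
    ⟨aF, fun p hp => by rw [haF p hp, Submodule.map_top, LinearMap.range_eq_top.mpr hsurj]⟩,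
    ⟨bF, fun p hp => by rw [hbF p hp, Submodule.map_bot]⟩, ?_, ?_⟩
  · -- gr_inf
    intro n p
    rw [hcq n, hcq (n-1), hconj (n+1-p)]
    set πC := ((LinearMap.range f).mkQ).baseChange ℂ with hπC
    set K := LinearMap.range (f.baseChange ℂ) with hKdef
    set A := F' p with hA
    set B := (F' (n+1-p)).map (MHS.conjC V') with hB
    set Wn := MHS.cx V' (W' n) with hWn
    set Wm := MHS.cx V' (W' (n-1)) with hWm
    have hT1 : (A ⊔ K) ⊓ (Wn ⊔ K) ≤ (A ⊓ Wn) ⊔ K := by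
      rintro x ⟨hx1, hx2⟩
      obtain ⟨a, ha, k, hk, rfl⟩ := Submodule.mem_sup.mp hx1
      have haWK : a ∈ Wn ⊔ K := by
        have heq : a = (a + k) - k := by abel
        rw [heq]
        exact Submodule.sub_mem _ hx2 (Submodule.mem_sup_right hk)
      have := MHS.strictFW h h' hfW hfF p n ⟨ha, haWK⟩
      exact Submodule.add_mem _ this (Submodule.mem_sup_right hk)
    have hT2 : (B ⊔ K) ⊓ (Wn ⊔ K) ≤ (B ⊓ Wn) ⊔ K := by
      rintro x ⟨hx1, hx2⟩
      obtain ⟨a, ha, k, hk, rfl⟩ := Submodule.mem_sup.mp hx1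
      have haWK : a ∈ Wn ⊔ K := by
        have heq : a = (a + k) - k := by abel
        rw [heq]
        exact Submodule.sub_mem _ hx2 (Submodule.mem_sup_right hk)
      have := MHS.strictFWc h h' hfW hfF (n+1-p) n ⟨ha, haWK⟩
      exact Submodule.add_mem _ this (Submodule.mem_sup_right hk)
    have h1 : A.map πC ⊓ Wn.map πC ≤ (A ⊓ Wn).map πC := by
      rw [hπC, MHS.map_piC_inf f]
      refine le_trans (Submodule.map_mono hT1) ?_
      rw [Submodule.map_sup, hKdef, MHS.map_piC_K f, sup_bot_eq]
    have h2 : B.map πC ⊓ Wn.map πC ≤ (B ⊓ Wn).map πC := by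
      rw [hπC, MHS.map_piC_inf f]
      refine le_trans (Submodule.map_mono hT2) ?_
      rw [Submodule.map_sup, hKdef, MHS.map_piC_K f, sup_bot_eq]
    apply le_antisymm
    · calc (A.map πC ⊓ Wn.map πC ⊔ Wm.map πC) ⊓ (B.map πC ⊓ Wn.map πC ⊔ Wm.map πC)
          ≤ ((A ⊓ Wn ⊔ Wm).map πC) ⊓ ((B ⊓ Wn ⊔ Wm).map πC) := by
            refine inf_le_inf ?_ ?_
            · rw [Submodule.map_sup]; exact sup_le_sup h1 le_rfl
            · rw [Submodule.map_sup]; exact sup_le_sup h2 le_rfl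
        _ = (((A ⊓ Wn ⊔ Wm) ⊔ K) ⊓ ((B ⊓ Wn ⊔ Wm) ⊔ K)).map πC := by
            rw [hπC, hKdef, MHS.map_piC_inf f]
        _ ≤ (Wm ⊔ K).map πC :=
            Submodule.map_mono (MHS.coreT3 h h' hfW hfF n p)
        _ = Wm.map πC := by
            rw [Submodule.map_sup, hKdef, hπC, MHS.map_piC_K f, sup_bot_eq]
    · exact le_inf le_sup_right le_sup_right
  · -- gr_sup
    intro n p
    rw [hcq n, hcq (n-1), hconj (n+1-p)]
    apply le_antisymm
    · exact sup_le inf_le_right (sup_le inf_le_right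
        (Submodule.map_mono (h'.cx_mono' (by omega))))
    · have hmap := congrArg
        (Submodule.map (((LinearMap.range f).mkQ).baseChange ℂ)) (h'.gr_sup n p)
      rw [Submodule.map_sup, Submodule.map_sup] at hmap
      calc (MHS.cx V' (W' n)).map (((LinearMap.range f).mkQ).baseChange ℂ)
          = _ := hmap.symm
        _ ≤ _ := sup_le_sup (Submodule.map_inf_le _)
            (sup_le_sup (Submodule.map_inf_le _) le_rfl)
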